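/- For every i ≥ 0, every composition f of i morphisms from {L_a, L_b, R_a, R_b} (over the alphabet {a,b}) and every infinite word w: if f(w) contains a factor b a^{j+2} b for some j ≥ i, then f is a composition of morphisms from {L_a, R_a} only. -/

import Mathlib

universe u
variable {A : Type u}

/-- Apply a substitution (given by images of letters) to a finite word. -/
def applyList (f : A → List A) (u : List A) : List A := u.flatMap f

/-- Starting position of the image of the `n`-th letter of `v` inside `f(v)`. -/
def blockStart (f : A → List A) (v : ℕ → A) : ℕ → ℕ
  | 0 => 0
  | n + 1 => blockStart f v n + (f (v n)).length

/-- `ApplyEq f v u` means `u = f(v)` for right-infinite words. -/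
def ApplyEq (f : A → List A) (v u : ℕ → A) : Prop :=
  ∀ (n i : ℕ) (h : i < (f (v n)).length),
    u (blockStart f v n + i) = (f (v n))[i]

/-- `u` occurs as a factor of `w` at position `k`. -/
def FactorAt (w : ℕ → A) (u : List A) (k : ℕ) : Prop :=
  ∀ (i : ℕ) (h : i < u.length), u[i] = w (k + i)

def Factor (w : ℕ → A) (u : List A) : Prop := ∃ k, FactorAt w u k

/-- `u` is a prefix of the infinite word `w`. -/
def PrefixOf (u : List A) (w : ℕ → A) : Prop :=
  ∀ (i : ℕ) (h : i < u.length), u[i] = w i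

/-- Membership in the stable set of a set `S` of substitutions. -/
def InStable (S : Set (A → List A)) (w : ℕ → A) : Prop :=
  ∃ (σ : ℕ → A → List A) (ws : ℕ → ℕ → A),
    (∀ n, σ n ∈ S) ∧ ws 0 = w ∧ ∀ n, ApplyEq (σ n) (ws (n + 1)) (ws n)

/-- Composition `σ_1 ∘ ⋯ ∘ σ_n` of the first `n` substitutions of `s` (0-indexed). -/
def compSeq (s : ℕ → A → List A) : ℕ → A → List A
  | 0 => fun a => [a]
  | n + 1 => fun a => applyList (compSeq s n) (s n a)

/-- `w` is S-adic with directive sequence `σ`. -/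
def SAdicWith (σ : ℕ → A → List A) (w : ℕ → A) : Prop :=
  ∃ a : ℕ → A, (∀ n, PrefixOf (compSeq σ n (a n)) w) ∧
    ∀ N : ℕ, ∃ n, N ≤ (compSeq σ n (a n)).length



-- Binary alphabet: letter `a` is `false`, letter `b` is `true`.
def La : Bool → List Bool | false => [false] | true => [false, true]
def Lb : Bool → List Bool | false => [true, false] | true => [true]
def Ra : Bool → List Bool | false => [false] | true => [true, false]
def Rb : Bool → List Bool | false => [false, true] | true => [true]

/-- An infinite word is balanced. -/
def IsBalanced (w : ℕ → Bool) : Prop :=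
  ∀ (c : Bool) (u v : List Bool), Factor w u → Factor w v → u.length = v.length →
    |(u.count c : ℤ) - (v.count c : ℤ)| ≤ 1

/-- Composition of a list of substitutions (`compList [σ₁, σ₂] = σ₁ ∘ σ₂`). -/
def compList (l : List (Bool → List Bool)) : Bool → List Bool :=
  l.foldr (fun f g a => applyList f (g a)) fun a => [a]

lemma applyList_nil {A : Type*} (f : A → List A) : applyList f [] = [] := rfl
lemma applyList_cons {A : Type*} (f : A → List A) (a : A) (y : List A) :
    applyList f (a :: y) = f a ++ applyList f y := rfl

lemma la_q : ∀ (y : List Bool) (k : ℕ) (t : List Bool),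
    applyList La y = List.replicate (k+1) false ++ (true :: t) →
    ∃ t', y = List.replicate k false ++ (true :: t') := by
  intro y
  induction y with
  | nil => intro k t h; simp [applyList_nil, List.replicate_succ] at h
  | cons c y ih =>
    intro k t h
    cases c with
    | false =>
      rw [applyList_cons] at h
      simp only [La, List.replicate_succ, List.cons_append, List.cons.injEq] at h
      obtain ⟨-, h⟩ := h
      cases k with
      | zero =>
        simp only [List.replicate, List.nil_append] at h
        exfalso
        cases y with
        | nil => simp [applyList_nil] at h
        | cons c z => cases c <;> simp [applyList_cons, La] at h
      | succ k =>
        obtain ⟨t', ht⟩ := ih k t (by simpa [List.replicate_succ] using h)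
        exact ⟨t', by simp [ht, List.replicate_succ]⟩
    | true =>
      rw [applyList_cons] at h
      simp only [La] at h
      cases k with
      | zero =>
        simp only [List.replicate, List.cons_append, List.nil_append, List.cons.injEq] at h
        exact ⟨y, by simp⟩
      | succ k =>
        simp [List.replicate_succ] at h

def pat (k : ℕ) : List Bool := true :: (List.replicate k false ++ [true])

lemma la_key : ∀ (y : List Bool) (k : ℕ) (s t : List Bool),
    applyList La y = s ++ pat (k+1) ++ t →
    ∃ s' t', y = s' ++ pat k ++ t' := by
  intro y
  induction y with
  | nil => intro k s t h; simp [applyList_nil, pat] at h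
  | cons c y ih =>
    intro k s t h
    cases c with
    | false =>
      rw [applyList_cons] at h
      cases s with
      | nil => simp [La, pat] at h
      | cons c1 s' =>
        simp only [La, List.cons_append, List.cons.injEq, List.singleton_append] at h
        obtain ⟨s'', t'', hy⟩ := ih k s' t h.2
        exact ⟨false :: s'', t'', by simp [hy]⟩
    | true =>
      rw [applyList_cons] at h
      cases s with
      | nil => simp [La, pat] at h
      | cons c1 s' =>
        cases s' with
        | nil =>
          simp only [La, pat, List.cons_append, List.nil_append, List.cons.injEq,
            List.append_assoc, List.singleton_append] at h
          obtain ⟨-, -, h⟩ := h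
          obtain ⟨t', ht⟩ := la_q y k t h
          exact ⟨[], t', by simp [pat, ht]⟩
        | cons c2 s'' =>
          simp only [La, List.cons_append, List.cons.injEq] at h
          obtain ⟨s3, t3, hy⟩ := ih k s'' t h.2.2
          exact ⟨true :: s3, t3, by simp [hy]⟩

lemma ra_q : ∀ (y : List Bool) (k : ℕ) (t : List Bool),
    applyList Ra y = List.replicate k false ++ (true :: t) →
    ∃ t', y = List.replicate k false ++ (true :: t') := by
  intro y
  induction y with
  | nil => intro k t h; simp [applyList_nil] at h
  | cons c y ih =>
    intro k t h
    cases c with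
    | false =>
      rw [applyList_cons] at h
      cases k with
      | zero => simp [Ra] at h
      | succ k =>
        simp only [Ra, List.replicate_succ, List.cons_append, List.cons.injEq,
          List.singleton_append] at h
        obtain ⟨t', ht⟩ := ih k t h.2
        exact ⟨t', by simp [ht, List.replicate_succ]⟩
    | true =>
      rw [applyList_cons] at h
      cases k with
      | zero =>
        simp only [Ra, List.replicate, List.cons_append, List.nil_append,
          List.cons.injEq] at h
        exact ⟨y, by simp⟩
      | succ k => simp [Ra, List.replicate_succ] at h

lemma ra_key : ∀ (y : List Bool) (k : ℕ) (s t : List Bool),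
    applyList Ra y = s ++ pat (k+1) ++ t →
    ∃ s' t', y = s' ++ pat k ++ t' := by
  intro y
  induction y with
  | nil => intro k s t h; simp [applyList_nil, pat] at h
  | cons c y ih =>
    intro k s t h
    cases c with
    | false =>
      rw [applyList_cons] at h
      cases s with
      | nil => simp [Ra, pat] at h
      | cons c1 s' =>
        simp only [Ra, List.cons_append, List.cons.injEq, List.singleton_append] at h
        obtain ⟨s'', t'', hy⟩ := ih k s' t h.2
        exact ⟨false :: s'', t'', by simp [hy]⟩
    | true =>
      rw [applyList_cons] at h
      cases s with
      | nil =>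
        simp only [Ra, pat, List.replicate_succ, List.cons_append, List.nil_append,
          List.cons.injEq, List.append_assoc, List.singleton_append] at h
        obtain ⟨t', ht⟩ := ra_q y k t h.2.2
        exact ⟨[], t', by simp [pat, ht]⟩
      | cons c1 s' =>
        cases s' with
        | nil => simp [Ra, pat, List.replicate_succ] at h
        | cons c2 s'' =>
          simp only [Ra, List.cons_append, List.cons.injEq] at h
          obtain ⟨s3, t3, hy⟩ := ih k s'' t h.2.2
          exact ⟨true :: s3, t3, by simp [hy]⟩

lemma lb_no_aa : ∀ (y : List Bool) (s t : List Bool),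
    applyList Lb y ≠ s ++ [false, false] ++ t := by
  intro y
  induction y with
  | nil => intro s t h; simp [applyList_nil] at h
  | cons c y ih =>
    intro s t h
    cases c with
    | false =>
      rw [applyList_cons] at h
      cases s with
      | nil => simp [Lb] at h
      | cons c1 s' =>
        cases s' with
        | nil =>
          simp only [Lb, List.cons_append, List.nil_append, List.cons.injEq] at h
          obtain ⟨-, -, h⟩ := h
          cases y with
          | nil => simp [applyList_nil] at h
          | cons c z => cases c <;> simp [applyList_cons, Lb] at h
        | cons c2 s'' =>
          simp only [Lb, List.cons_append, List.cons.injEq] at h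
          exact ih s'' t h.2.2
    | true =>
      rw [applyList_cons] at h
      cases s with
      | nil => simp [Lb] at h
      | cons c1 s' =>
        simp only [Lb, List.cons_append, List.cons.injEq, List.singleton_append] at h
        exact ih s' t h.2

lemma rb_no_aa : ∀ (y : List Bool) (s t : List Bool),
    applyList Rb y ≠ s ++ [false, false] ++ t := by
  intro y
  induction y with
  | nil => intro s t h; simp [applyList_nil] at h
  | cons c y ih =>
    intro s t h
    cases c with
    | false =>
      rw [applyList_cons] at h
      cases s with
      | nil => simp [Rb] at h
      | cons c1 s' =>
        cases s' with
        | nil => simp [Rb] at h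
        | cons c2 s'' =>
          simp only [Rb, List.cons_append, List.cons.injEq] at h
          exact ih s'' t h.2.2
    | true =>
      rw [applyList_cons] at h
      cases s with
      | nil => simp [Rb] at h
      | cons c1 s' =>
        simp only [Rb, List.cons_append, List.cons.injEq, List.singleton_append] at h
        exact ih s' t h.2

lemma compList_cons (h : Bool → List Bool) (rest : List (Bool → List Bool)) (a : Bool) :
    compList (h :: rest) a = applyList h (compList rest a) := rfl

lemma applyList_compList_cons (h : Bool → List Bool) (rest : List (Bool → List Bool))
    (x : List Bool) :
    applyList (compList (h :: rest)) x = applyList h (applyList (compList rest) x) := by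
  simp only [applyList, List.flatMap_assoc]
  rfl

lemma key : ∀ (l : List (Bool → List Bool)),
    (∀ g ∈ l, g ∈ ({La, Lb, Ra, Rb} : Set (Bool → List Bool))) →
    ∀ (j : ℕ), l.length ≤ j → ∀ (x s t : List Bool),
    applyList (compList l) x = s ++ pat (j+2) ++ t →
    ∀ g ∈ l, g = La ∨ g = Ra := by
  intro l
  induction l with
  | nil => intro _ _ _ _ _ _ _ g hg; simp at hg
  | cons h rest ih =>
    intro hl j hj x s t hx g hg
    rw [applyList_compList_cons] at hx
    set y := applyList (compList rest) x with hy
    obtain ⟨j', rfl⟩ : ∃ j', j = j' + 1 := by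
      refine ⟨j - 1, ?_⟩
      have := hj
      simp only [List.length_cons] at this
      omega
    have hj' : rest.length ≤ j' := by simp only [List.length_cons] at hj; omega
    have hmem : h = La ∨ h = Lb ∨ h = Ra ∨ h = Rb := by
      have := hl h List.mem_cons_self
      simpa [Set.mem_insert_iff] using this
    have hpat : pat (j' + 1 + 2) = pat ((j' + 2) + 1) := by ring_nf
    rw [hpat] at hx
    rcases hmem with rfl | rfl | rfl | rfl
    · -- h = La
      obtain ⟨s', t', hy'⟩ := la_key y (j' + 2) s t hx
      rcases List.mem_cons.mp hg with rfl | hg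
      · exact Or.inl rfl
      · exact ih (fun g hg => hl g (List.mem_cons_of_mem _ hg)) j' hj' x s' t' hy' g hg
    · -- h = Lb : contradiction
      exfalso
      refine lb_no_aa y (s ++ [true]) (List.replicate (j'+1) false ++ [true] ++ t) ?_
      rw [hx]
      simp [pat, List.replicate_succ]
    · -- h = Ra
      obtain ⟨s', t', hy'⟩ := ra_key y (j' + 2) s t hx
      rcases List.mem_cons.mp hg with rfl | hg
      · exact Or.inr rfl
      · exact ih (fun g hg => hl g (List.mem_cons_of_mem _ hg)) j' hj' x s' t' hy' g hg
    · -- h = Rb : contradiction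
      exfalso
      refine rb_no_aa y (s ++ [true]) (List.replicate (j'+1) false ++ [true] ++ t) ?_
      rw [hx]
      simp [pat, List.replicate_succ]

lemma comp_ne_nil : ∀ (l : List (Bool → List Bool)),
    (∀ g ∈ l, g ∈ ({La, Lb, Ra, Rb} : Set (Bool → List Bool))) →
    ∀ a, compList l a ≠ [] := by
  intro l
  induction l with
  | nil => intro _ a; simp [compList]
  | cons h rest ih =>
    intro hl a
    have h1 : compList rest a ≠ [] := ih (fun g hg => hl g (List.mem_cons_of_mem _ hg)) a
    have hmem : h = La ∨ h = Lb ∨ h = Ra ∨ h = Rb := by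
      simpa [Set.mem_insert_iff] using hl h List.mem_cons_self
    rw [compList_cons]
    cases hc : compList rest a with
    | nil => exact absurd hc h1
    | cons c z =>
      have hne : h c ≠ [] := by
        rcases hmem with rfl | rfl | rfl | rfl <;> cases c <;> simp [La, Lb, Ra, Rb]
      rw [applyList_cons]
      simp [hne]

lemma blockStart_ge (F : Bool → List Bool) (hF : ∀ a, F a ≠ []) (w : ℕ → Bool) :
    ∀ N, N ≤ blockStart F w N := by
  intro N
  induction N with
  | zero => exact Nat.zero_le _
  | succ N ih =>
    have : (F (w N)).length ≠ 0 := by simpa using hF (w N)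
    simp only [blockStart]
    omega

lemma image_prefix (F : Bool → List Bool) (w u : ℕ → Bool) (hu : ApplyEq F w u) (N : ℕ) :
    (applyList F ((List.range N).map w)).length = blockStart F w N ∧
      ∀ (i : ℕ) (h : i < (applyList F ((List.range N).map w)).length),
        (applyList F ((List.range N).map w))[i] = u i := by
  induction N with
  | zero => exact ⟨rfl, by intro i h; simp [applyList] at h⟩
  | succ N ih =>
    have hsplit : applyList F ((List.range (N+1)).map w)
        = applyList F ((List.range N).map w) ++ F (w N) := by
      rw [List.range_succ]
      simp [applyList]
    constructor
    · rw [hsplit, List.length_append, ih.1]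
      rfl
    · intro i h
      rw [List.getElem_of_eq hsplit]
      rw [hsplit] at h
      rcases lt_or_ge i (applyList F ((List.range N).map w)).length with h' | h'
      · rw [List.getElem_append_left h']
        exact ih.2 i h'
      · have hi2 : i - (applyList F ((List.range N).map w)).length < (F (w N)).length := by
          rw [List.length_append] at h
          omega
        rw [List.getElem_append_right h']
        have h3 := hu N (i - (applyList F ((List.range N).map w)).length) hi2
        rw [← h3]
        congr 1
        rw [← ih.1]
        omega

/-- if a composition `f` of `i` morphisms from `{L_a, L_b, R_a, R_b}`
is such that `f(w)` contains a factor `b a^{j+2} b` with `j ≥ i`, then all the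
morphisms composed are in `{L_a, R_a}`. -/
theorem stmt15 (l : List (Bool → List Bool))
    (hl : ∀ g ∈ l, g ∈ ({La, Lb, Ra, Rb} : Set (Bool → List Bool)))
    (j : ℕ) (hj : l.length ≤ j) (w u : ℕ → Bool) (hu : ApplyEq (compList l) w u)
    (hfac : Factor u ([true] ++ List.replicate (j + 2) false ++ [true])) :
    ∀ g ∈ l, g = La ∨ g = Ra := by
  obtain ⟨k, hk⟩ := hfac
  have hpe : ([true] ++ List.replicate (j + 2) false ++ [true]) = pat (j + 2) := by
    simp [pat]
  rw [hpe] at hk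
  have hip := image_prefix (compList l) w u hu (k + (j + 4))
  have hmlen : k + (j + 4) ≤ (applyList (compList l) ((List.range (k + (j + 4))).map w)).length := by
    rw [hip.1]
    exact blockStart_ge (compList l) (comp_ne_nil l hl) w (k + (j + 4))
  set m := applyList (compList l) ((List.range (k + (j + 4))).map w) with hm
  have hpatlen : (pat (j + 2)).length = j + 4 := by simp [pat]
  have h1 : (m.drop k).take (j + 4) = pat (j + 2) := by
    have hlen2 : ((m.drop k).take (j + 4)).length = j + 4 := by
      rw [List.length_take, List.length_drop]
      omega
    apply List.ext_getElem (by omega)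
    intro i h h'
    have hi : i < j + 4 := by omega
    rw [List.getElem_take, List.getElem_drop]
    rw [hip.2 (k + i) (by omega)]
    exact (hk i (by omega)).symm
  have hdecomp : m = m.take k ++ pat (j + 2) ++ m.drop (k + (j + 4)) := by
    conv_lhs => rw [← List.take_append_drop k m]
    rw [List.append_assoc]
    congr 1
    conv_lhs => rw [← List.take_append_drop (j + 4) (m.drop k)]
    rw [h1, List.drop_drop]
  exact key l hl j hj ((List.range (k + (j + 4))).map w) (m.take k)
    (m.drop (k + (j + 4))) (by rw [← hm]; exact hdecomp)
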